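/- arXiv:2003.07541 — 4 statements merged into one kernel-verified Lean document; each statement's English description precedes it below -/
import Mathlib

section
/- (Erdős–Gallai) For all integers k, n ≥ 1, every simple graph on n vertices containing no path on k vertices as a subgraph has at most (k−2)n/2 edges. -/
/-- `G` contains a path on `k` vertices as a subgraph. -/
def ContainsPathOn {V : Type*} (G : SimpleGraph V) (k : ℕ) : Prop :=
  ∃ p : Fin k → V, Function.Injective p ∧
    ∀ (j : ℕ) (h : j + 1 < k), G.Adj (p ⟨j, Nat.lt_of_succ_lt h⟩) (p ⟨j + 1, h⟩)

namespace EGaux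

open Finset

/-- path on `m` vertices presented as a function `ℕ → V`. -/
def NPath {V : Type} (G : SimpleGraph V) (m : ℕ) (f : ℕ → V) : Prop :=
  (∀ i j, i < m → j < m → f i = f j → i = j) ∧
  ∀ j, j + 1 < m → G.Adj (f j) (f (j + 1))

variable {V : Type} {G : SimpleGraph V}

lemma cpo_of_npath {m : ℕ} {f : ℕ → V} (h : NPath G m f) : ContainsPathOn G m := by
  refine ⟨fun i => f i.val, ?_, ?_⟩
  · intro a b hab
    exact Fin.ext (h.1 a.val b.val a.isLt b.isLt hab)
  · intro j hj
    exact h.2 j hj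

lemma npath_of_cpo {m : ℕ} (hm : 0 < m) (h : ContainsPathOn G m) :
    ∃ f : ℕ → V, NPath G m f := by
  obtain ⟨p, hinj, hadj⟩ := h
  refine ⟨fun j => p ⟨j % m, Nat.mod_lt _ hm⟩, ?_, ?_⟩
  · intro i j hi hj hij
    have := hinj hij
    have := congrArg Fin.val this
    simpa [Nat.mod_eq_of_lt hi, Nat.mod_eq_of_lt hj] using this
  · intro j hj
    have h1 : j % m = j := Nat.mod_eq_of_lt (by omega)
    have h2 : (j + 1) % m = j + 1 := Nat.mod_eq_of_lt hj
    have := hadj j hj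
    convert this using 2 <;> simp [h1, h2]

lemma cpo_mono {m m' : ℕ} (hle : m' ≤ m) (h : ContainsPathOn G m) :
    ContainsPathOn G m' := by
  obtain ⟨p, hinj, hadj⟩ := h
  refine ⟨fun i => p (Fin.castLE hle i), fun a b hab => ?_, fun j hj => ?_⟩
  · exact Fin.castLE_injective hle (hinj hab)
  · exact hadj j (by omega)

lemma cpo_one [Nonempty V] : ContainsPathOn G 1 := by
  refine ⟨fun _ => Classical.arbitrary V, fun a b _ => Subsingleton.elim a b,
    fun j h => absurd h (by omega)⟩

lemma cpo_le_card [Fintype V] {m : ℕ} (h : ContainsPathOn G m) : m ≤ Fintype.card V := by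
  obtain ⟨p, hinj, -⟩ := h
  simpa using Fintype.card_le_of_injective p hinj

lemma cpo_induce {s : Set V} {m : ℕ} (h : ContainsPathOn (G.induce s) m) :
    ContainsPathOn G m := by
  obtain ⟨p, hinj, hadj⟩ := h
  refine ⟨fun i => (p i).val, fun a b hab => hinj (Subtype.val_injective hab),
    fun j hj => ?_⟩
  exact hadj j hj

lemma walk_boundary (S : Finset V) : ∀ {a b : V}, G.Walk a b → a ∉ S → b ∈ S →
    ∃ x y, x ∉ S ∧ y ∈ S ∧ G.Adj x y := by
  intro a b w
  induction w with
  | nil => intro h1 h2; exact absurd h2 h1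
  | @cons u x b h p ih =>
    intro h1 h2
    by_cases hx : x ∈ S
    · exact ⟨u, x, h1, hx, h⟩
    · exact ih hx h2


section Key

variable {V : Type} [Fintype V] [DecidableEq V] {G : SimpleGraph V} [DecidableRel G.Adj]

lemma key {k : ℕ} (hk : 2 ≤ k) (hconn : G.Connected)
    (hdeg : ∀ v, k ≤ 2 * G.degree v + 1) (hnk : k ≤ Fintype.card V) :
    ContainsPathOn G k := by
  classical
  have hne : Nonempty V := Fintype.card_pos_iff.mp (by omega)
  set n := Fintype.card V with hn
  set L := Nat.findGreatest (fun m => ContainsPathOn G m) n with hLdef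
  have h1 : ContainsPathOn G 1 := cpo_one
  have hL1 : 1 ≤ L := Nat.le_findGreatest (by omega) h1
  have hLcpo : ContainsPathOn G L :=
    Nat.findGreatest_spec (P := fun m => ContainsPathOn G m) (m := 1) (by omega) h1
  have hmax : ∀ m, L < m → m ≤ n → ¬ ContainsPathOn G m := by
    intro m h1' h2'
    exact (Nat.findGreatest_eq_iff.mp hLdef.symm).2.2 h1' h2'
  by_cases hLk : k ≤ L
  · exact cpo_mono hLk hLcpo
  push_neg at hLk
  exfalso
  have hLn : L + 1 ≤ n := by omega
  obtain ⟨f, hfinj, hfadj⟩ := npath_of_cpo (by omega) hLcpo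
  have hnot : ¬ ContainsPathOn G (L + 1) := hmax _ (by omega) hLn
  -- all neighbors of the first endpoint lie on the path
  have claimA : ∀ u, G.Adj (f 0) u → ∃ j, j < L ∧ f j = u := by
    intro u hu
    by_contra hcon
    push_neg at hcon
    refine hnot (cpo_of_npath (m := L + 1)
      (f := fun j => if j = 0 then u else f (j - 1)) ⟨?_, ?_⟩)
    · intro a b ha hb hab
      dsimp only at hab
      rcases Nat.eq_zero_or_pos a with h1 | h1 <;> rcases Nat.eq_zero_or_pos b with h2 | h2
      · omega
      · rw [if_pos h1, if_neg (by omega)] at hab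
        exact absurd hab.symm (hcon (b - 1) (by omega))
      · rw [if_neg (by omega), if_pos h2] at hab
        exact absurd hab (hcon (a - 1) (by omega))
      · rw [if_neg (by omega), if_neg (by omega)] at hab
        have := hfinj (a - 1) (b - 1) (by omega) (by omega) hab
        omega
    · intro j hj
      dsimp only
      rcases Nat.eq_zero_or_pos j with h1 | h1
      · subst h1
        rw [if_pos rfl, if_neg (by omega)]
        simpa using hu.symm
      · rw [if_neg (by omega), if_neg (by omega)]
        have e : j + 1 - 1 = (j - 1) + 1 := by omega
        rw [e]
        exact hfadj (j - 1) (by omega)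
  -- all neighbors of the last endpoint lie on the path
  have claimB : ∀ u, G.Adj (f (L - 1)) u → ∃ j, j < L ∧ f j = u := by
    intro u hu
    by_contra hcon
    push_neg at hcon
    refine hnot (cpo_of_npath (m := L + 1)
      (f := fun j => if j < L then f j else u) ⟨?_, ?_⟩)
    · intro a b ha hb hab
      dsimp only at hab
      by_cases h1 : a < L <;> by_cases h2 : b < L
      · rw [if_pos h1, if_pos h2] at hab; exact hfinj a b h1 h2 hab
      · rw [if_pos h1, if_neg h2] at hab; exact absurd hab (hcon a h1)
      · rw [if_neg h1, if_pos h2] at hab; exact absurd hab.symm (hcon b h2)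
      · omega
    · intro j hj
      dsimp only
      by_cases h1 : j + 1 < L
      · rw [if_pos (by omega), if_pos h1]; exact hfadj j h1
      · have hjL : j = L - 1 := by omega
        rw [if_pos (by omega), if_neg (by omega), hjL]
        exact hu
  -- endpoint neighborhoods as index sets
  set A := (Finset.range (L - 1)).filter (fun i => G.Adj (f 0) (f (i + 1))) with hA
  set B := (Finset.range (L - 1)).filter (fun i => G.Adj (f (L - 1)) (f i)) with hB
  have hcardA : A.card = G.degree (f 0) := by
    rw [← SimpleGraph.card_neighborFinset_eq_degree]
    apply Finset.card_bij (fun i _ => f (i + 1))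
    · intro i hi
      rw [SimpleGraph.mem_neighborFinset]
      exact (Finset.mem_filter.mp hi).2
    · intro i hi i' hi' hii
      have h1 := Finset.mem_range.mp (Finset.mem_filter.mp hi).1
      have h2 := Finset.mem_range.mp (Finset.mem_filter.mp hi').1
      have := hfinj (i + 1) (i' + 1) (by omega) (by omega) hii
      omega
    · intro u hu
      rw [SimpleGraph.mem_neighborFinset] at hu
      obtain ⟨j, hj, hfj⟩ := claimA u hu
      have hj0 : j ≠ 0 := by
        intro h
        rw [h] at hfj
        rw [← hfj] at hu
        exact G.irrefl hu
      refine ⟨j - 1, Finset.mem_filter.mpr ⟨Finset.mem_range.mpr (by omega), ?_⟩, ?_⟩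
      · rw [(by omega : j - 1 + 1 = j), hfj]; exact hu
      · rw [(by omega : j - 1 + 1 = j)]; exact hfj
  have hcardB : B.card = G.degree (f (L - 1)) := by
    rw [← SimpleGraph.card_neighborFinset_eq_degree]
    apply Finset.card_bij (fun i _ => f i)
    · intro i hi
      rw [SimpleGraph.mem_neighborFinset]
      exact (Finset.mem_filter.mp hi).2
    · intro i hi i' hi' hii
      have h1 := Finset.mem_range.mp (Finset.mem_filter.mp hi).1
      have h2 := Finset.mem_range.mp (Finset.mem_filter.mp hi').1
      exact hfinj i i' (by omega) (by omega) hii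
    · intro u hu
      rw [SimpleGraph.mem_neighborFinset] at hu
      obtain ⟨j, hj, hfj⟩ := claimB u hu
      have hjL : j ≠ L - 1 := by
        intro h
        rw [h] at hfj
        rw [← hfj] at hu
        exact G.irrefl hu
      refine ⟨j, Finset.mem_filter.mpr ⟨Finset.mem_range.mpr (by omega), ?_⟩, hfj⟩
      rw [hfj]; exact hu
  -- pigeonhole: a rotation index exists
  have hAB : ∃ i, i ∈ A ∩ B := by
    by_contra hcon
    push_neg at hcon
    have hdisj : Disjoint A B :=
      Finset.disjoint_left.mpr fun {x} hx hx' => hcon x (Finset.mem_inter.mpr ⟨hx, hx'⟩)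
    have h1 : A.card + B.card ≤ L - 1 := by
      rw [← Finset.card_union_of_disjoint hdisj]
      calc (A ∪ B).card ≤ (Finset.range (L - 1)).card :=
            Finset.card_le_card (Finset.union_subset (Finset.filter_subset _ _)
              (Finset.filter_subset _ _))
        _ = L - 1 := Finset.card_range _
    have d1 := hdeg (f 0)
    have d2 := hdeg (f (L - 1))
    omega
  obtain ⟨i, hiAB⟩ := hAB
  rw [Finset.mem_inter] at hiAB
  have hiL : i < L - 1 := Finset.mem_range.mp (Finset.mem_filter.mp hiAB.1).1
  have hadjA : G.Adj (f 0) (f (i + 1)) := (Finset.mem_filter.mp hiAB.1).2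
  have hadjB : G.Adj (f (L - 1)) (f i) := (Finset.mem_filter.mp hiAB.2).2
  have hL2 : 2 ≤ L := by omega
  have hL0 : 0 < L := by omega
  -- the cycle through all path vertices
  set c : ℕ → V := fun j => if j ≤ i then f j else f (L + i - j) with hc
  have hc1 : ∀ j, j < L → ∃ m, m < L ∧ c j = f m := by
    intro j hj
    by_cases h1 : j ≤ i
    · exact ⟨j, by omega, by simp only [hc]; rw [if_pos h1]⟩
    · exact ⟨L + i - j, by omega, by simp only [hc]; rw [if_neg h1]⟩
  have hc2 : ∀ j j', j < L → j' < L → c j = c j' → j = j' := by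
    intro j j' hj hj' hcc
    simp only [hc] at hcc
    by_cases h1 : j ≤ i <;> by_cases h2 : j' ≤ i
    · rw [if_pos h1, if_pos h2] at hcc; exact hfinj _ _ (by omega) (by omega) hcc
    · rw [if_pos h1, if_neg h2] at hcc
      have := hfinj _ _ (by omega) (by omega) hcc; omega
    · rw [if_neg h1, if_pos h2] at hcc
      have := hfinj _ _ (by omega) (by omega) hcc; omega
    · rw [if_neg h1, if_neg h2] at hcc
      have := hfinj _ _ (by omega) (by omega) hcc; omega
  have hc3 : ∀ j, j < L → G.Adj (c j) (c ((j + 1) % L)) := by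
    intro j hj
    by_cases hjL : j + 1 < L
    · rw [Nat.mod_eq_of_lt hjL]
      by_cases h1 : j < i
      · simp only [hc]
        rw [if_pos (by omega), if_pos (by omega)]
        exact hfadj j (by omega)
      · by_cases h2 : j = i
        · simp only [hc]
          rw [if_pos (by omega), if_neg (by omega)]
          subst h2
          rw [(by omega : L + j - (j + 1) = L - 1)]
          exact hadjB.symm
        · simp only [hc]
          rw [if_neg (by omega), if_neg (by omega)]
          have := hfadj (L + i - (j + 1)) (by omega)
          rw [(by omega : L + i - (j + 1) + 1 = L + i - j)] at this
          exact this.symm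
    · have hj1 : j + 1 = L := by omega
      rw [hj1, Nat.mod_self]
      simp only [hc]
      rw [if_neg (by omega), if_pos (by omega)]
      rw [(by omega : L + i - j = i + 1)]
      exact hadjA.symm
  have hc4 : ∀ m, m < L → ∃ j, j < L ∧ c j = f m := by
    intro m hm
    by_cases h1 : m ≤ i
    · exact ⟨m, by omega, by simp only [hc]; rw [if_pos h1]⟩
    · refine ⟨L + i - m, by omega, ?_⟩
      simp only [hc]
      rw [if_neg (by omega)]
      congr 1
      omega
  -- a vertex outside the path and a boundary edge
  set S : Finset V := (Finset.range L).image f with hS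
  have hScard : S.card = L := by
    rw [hS, Finset.card_image_of_injOn, Finset.card_range]
    intro a ha b hb hab
    exact hfinj a b (Finset.mem_range.mp ha) (Finset.mem_range.mp hb) hab
  have hSex : ∃ u, u ∉ S := by
    by_contra hcon
    push_neg at hcon
    have hsub : Finset.univ ⊆ S := fun x _ => hcon x
    have := Finset.card_le_card hsub
    rw [Finset.card_univ, hScard] at this
    omega
  obtain ⟨u, huS⟩ := hSex
  have hf0S : f 0 ∈ S := Finset.mem_image.mpr ⟨0, Finset.mem_range.mpr (by omega), rfl⟩
  obtain ⟨w⟩ := hconn.preconnected u (f 0)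
  obtain ⟨a, b, haS, hbS, hab⟩ := walk_boundary S w huS hf0S
  obtain ⟨m, hm, hfm⟩ := Finset.mem_image.mp hbS
  obtain ⟨j0, hj0L, hcj0⟩ := hc4 m (Finset.mem_range.mp hm)
  have hcS : ∀ j, j < L → c j ∈ S := by
    intro j hj
    obtain ⟨m', hm', hcm⟩ := hc1 j hj
    rw [hcm]
    exact Finset.mem_image.mpr ⟨m', Finset.mem_range.mpr hm', rfl⟩
  -- the longer path: start outside, go around the cycle
  refine hmax (L + 1) (by omega) hLn (cpo_of_npath (m := L + 1)
    (f := fun t => if t = 0 then a else c ((j0 + (t - 1)) % L)) ⟨?_, ?_⟩)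
  · intro t t' ht ht' htt
    dsimp only at htt
    rcases Nat.eq_zero_or_pos t with h1 | h1 <;> rcases Nat.eq_zero_or_pos t' with h2 | h2
    · omega
    · rw [if_pos h1, if_neg (by omega)] at htt
      have := hcS ((j0 + (t' - 1)) % L) (Nat.mod_lt _ hL0)
      rw [← htt] at this
      exact absurd this haS
    · rw [if_neg (by omega), if_pos h2] at htt
      have := hcS ((j0 + (t - 1)) % L) (Nat.mod_lt _ hL0)
      rw [htt] at this
      exact absurd this haS
    · rw [if_neg (by omega), if_neg (by omega)] at htt
      have hmod := hc2 _ _ (Nat.mod_lt _ hL0) (Nat.mod_lt _ hL0) htt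
      have h3 : (t - 1) ≡ (t' - 1) [MOD L] := Nat.ModEq.add_left_cancel' j0 hmod
      have h4 : (t - 1) % L = (t' - 1) % L := h3
      rw [Nat.mod_eq_of_lt (by omega), Nat.mod_eq_of_lt (by omega)] at h4
      omega
  · intro t ht
    dsimp only
    rcases Nat.eq_zero_or_pos t with h1 | h1
    · subst h1
      rw [if_pos rfl, if_neg (by omega)]
      rw [(by omega : 1 - 1 = 0), Nat.add_zero, Nat.mod_eq_of_lt hj0L, hcj0, hfm]
      exact hab
    · rw [if_neg (by omega), if_neg (by omega)]
      have e1 : j0 + (t + 1 - 1) = (j0 + (t - 1)) + 1 := by omega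
      rw [e1]
      set x := j0 + (t - 1) with hx
      have hmm : (x + 1) % L = (x % L + 1) % L := by
        conv_lhs => rw [Nat.add_mod]
        rw [Nat.mod_eq_of_lt (show (1 : ℕ) < L from hL2)]
      rw [hmm]
      exact hc3 (x % L) (Nat.mod_lt _ hL0)

end Key


section Counting

variable {V : Type} [Fintype V] [DecidableEq V] (G : SimpleGraph V) [DecidableRel G.Adj]

lemma degree_induce (s : Set V) [DecidablePred (· ∈ s)]
    [DecidableRel (G.induce s).Adj] (x : s) :
    (G.induce s).degree x = ((G.neighborFinset x.val).filter (fun w => w ∈ s)).card := by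
  rw [← SimpleGraph.card_neighborFinset_eq_degree]
  apply Finset.card_bij (fun y _ => y.val)
  · intro y hy
    rw [SimpleGraph.mem_neighborFinset] at hy
    rw [Finset.mem_filter, SimpleGraph.mem_neighborFinset]
    exact ⟨hy, y.2⟩
  · intro y _ y' _ h
    exact Subtype.val_injective h
  · intro w hw
    rw [Finset.mem_filter, SimpleGraph.mem_neighborFinset] at hw
    exact ⟨⟨w, hw.2⟩, by rw [SimpleGraph.mem_neighborFinset]; exact hw.1, rfl⟩

lemma two_mul_ncard : 2 * G.edgeSet.ncard = ∑ v, G.degree v := by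
  rw [Set.ncard_eq_toFinset_card']
  exact (SimpleGraph.sum_degrees_eq_twice_card_edges G).symm

end Counting

theorem main (k : ℕ) (hk2 : 2 ≤ k) :
    ∀ n : ℕ, ∀ (V : Type) [Fintype V] [DecidableEq V] (G : SimpleGraph V)
      [DecidableRel G.Adj],
      Fintype.card V = n → ¬ ContainsPathOn G k → 2 * G.edgeSet.ncard ≤ (k - 2) * n := by
  intro n
  induction n using Nat.strong_induction_on with
  | _ n IH =>
    intro V _ _ G _ hcard hfree
    classical
    rw [two_mul_ncard]
    by_cases hsmall : n < k
    · -- trivial bound for few vertices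
      have hdeg : ∀ v, G.degree v ≤ n - 1 := by
        intro v
        have := G.degree_lt_card_verts v
        omega
      calc ∑ v, G.degree v ≤ ∑ _v : V, (n - 1) := Finset.sum_le_sum fun v _ => hdeg v
        _ = n * (n - 1) := by rw [Finset.sum_const, Finset.card_univ, hcard, smul_eq_mul]
        _ ≤ n * (k - 2) := Nat.mul_le_mul_left _ (by omega)
        _ = (k - 2) * n := Nat.mul_comm _ _
    push_neg at hsmall
    by_cases hlow : ∃ v, 2 * G.degree v + 2 ≤ k
    · -- delete a low-degree vertex
      obtain ⟨v, hv⟩ := hlow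
      set s : Set V := {u | u ≠ v} with hs
      have hmem : ∀ u, u ∈ s ↔ u ≠ v := fun u => Iff.rfl
      have hcs : Fintype.card s = n - 1 := by
        have : Fintype.card s = (Finset.univ.filter (fun u => u ∈ s)).card :=
          Fintype.card_subtype _
        rw [this]
        have he : Finset.univ.filter (fun u => u ∈ s) = Finset.univ.erase v := by
          ext u
          simp [hmem, Finset.mem_erase]
        rw [he, Finset.card_erase_of_mem (Finset.mem_univ v), Finset.card_univ, hcard]
      have hfree' : ¬ ContainsPathOn (G.induce s) k := fun h => hfree (cpo_induce h)
      have hIH := IH (n - 1) (by omega) s (G.induce s) hcs hfree'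
      -- degree bookkeeping
      have hsplit : ∑ u, G.degree u
          = G.degree v + ∑ u ∈ Finset.univ.filter (fun u => ¬ u = v), G.degree u := by
        rw [← Finset.sum_filter_add_sum_filter_not Finset.univ (fun u => u = v)]
        congr 1
        rw [Finset.filter_eq', if_pos (Finset.mem_univ v), Finset.sum_singleton]
      have hptw : ∀ u, u ≠ v → G.degree u
          = ((G.neighborFinset u).filter (fun w => w ∈ s)).card
            + (if G.Adj u v then 1 else 0) := by
        intro u _
        have hsp := Finset.card_filter_add_card_filter_not
          (s := G.neighborFinset u) (p := fun w => w ∈ s)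
        have hneg : (G.neighborFinset u).filter (fun w => ¬ w ∈ s)
            = (G.neighborFinset u).filter (fun w => w = v) := by
          apply Finset.filter_congr
          intro w _
          simp [hmem]
        rw [hneg] at hsp
        rw [← SimpleGraph.card_neighborFinset_eq_degree, ← hsp]
        congr 1
        rw [Finset.filter_eq']
        by_cases hadj : G.Adj u v
        · rw [if_pos ((SimpleGraph.mem_neighborFinset _ _ _).mpr hadj), if_pos hadj,
            Finset.card_singleton]
        · rw [if_neg (fun hmemv => hadj ((SimpleGraph.mem_neighborFinset _ _ _).mp hmemv)),
            if_neg hadj, Finset.card_empty]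
      have hsum2 : ∑ u ∈ Finset.univ.filter (fun u => ¬ u = v), G.degree u
          = (∑ u ∈ Finset.univ.filter (fun u => ¬ u = v),
              ((G.neighborFinset u).filter (fun w => w ∈ s)).card)
            + ∑ u ∈ Finset.univ.filter (fun u => ¬ u = v),
                (if G.Adj u v then 1 else 0) := by
        rw [← Finset.sum_add_distrib]
        apply Finset.sum_congr rfl
        intro u hu
        exact hptw u (by simpa using (Finset.mem_filter.mp hu).2)
      have hlast : ∑ u ∈ Finset.univ.filter (fun u => ¬ u = v),
          (if G.Adj u v then 1 else 0) = G.degree v := by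
        rw [← Finset.card_filter, Finset.filter_filter]
        rw [← SimpleGraph.card_neighborFinset_eq_degree]
        congr 1
        ext u
        simp only [Finset.mem_filter, Finset.mem_univ, true_and,
          SimpleGraph.mem_neighborFinset]
        constructor
        · rintro ⟨-, h⟩; exact h.symm
        · intro h; exact ⟨(G.ne_of_adj h.symm), h.symm⟩
      have hfirst : ∑ u ∈ Finset.univ.filter (fun u => ¬ u = v),
            ((G.neighborFinset u).filter (fun w => w ∈ s)).card
          = ∑ x : s, (G.induce s).degree x := by
        rw [Finset.sum_subtype (p := fun u => u ∈ s)
          (Finset.univ.filter (fun u => ¬ u = v)) (by simp [hmem])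
          (fun u => ((G.neighborFinset u).filter (fun w => w ∈ s)).card)]
        apply Finset.sum_congr rfl
        intro x _
        exact (degree_induce G s x).symm
      have hindsum : ∑ x : s, (G.induce s).degree x = 2 * (G.induce s).edgeSet.ncard :=
        (two_mul_ncard _).symm
      have heq : (k - 2) * (n - 1) + (k - 2) = (k - 2) * n := by
        rw [← Nat.mul_succ]
        congr 1
        omega
      have hdv : 2 * G.degree v ≤ k - 2 := by omega
      rw [hsplit, hsum2, hlast, hfirst, hindsum]
      linarith
    · -- high minimum degree
      have hdeg : ∀ v, k ≤ 2 * G.degree v + 1 := by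
        push_neg at hlow
        intro v
        have := hlow v
        omega
      by_cases hconn : G.Connected
      · exact absurd (key hk2 hconn hdeg (by rw [hcard]; exact hsmall)) hfree
      · -- disconnected: split along a connected component
        have hne : Nonempty V := by
          rw [← Fintype.card_pos_iff, hcard]
          omega
        have hpre : ¬ G.Preconnected := fun hp =>
          hconn ((SimpleGraph.connected_iff G).mpr ⟨hp, hne⟩)
        rw [SimpleGraph.Preconnected] at hpre
        push_neg at hpre
        obtain ⟨v, w, hvw⟩ := hpre
        set s : Set V := {x | G.Reachable v x} with hs
        have hvs : v ∈ s := SimpleGraph.Reachable.refl v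
        have hws : w ∉ s := hvw
        have hclosed : ∀ x y, G.Adj x y → (x ∈ s ↔ y ∈ s) := by
          intro x y hxy
          constructor
          · intro hx; exact hx.trans hxy.reachable
          · intro hy; exact hy.trans hxy.symm.reachable
        set t : Set V := {x | ¬ x ∈ s} with ht
        have hdegs : ∀ x : s, (G.induce s).degree x = G.degree x.val := by
          intro x
          rw [degree_induce, ← SimpleGraph.card_neighborFinset_eq_degree]
          congr 1
          apply Finset.filter_true_of_mem
          intro w' hw'
          rw [SimpleGraph.mem_neighborFinset] at hw'
          exact (hclosed _ _ hw').mp x.2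
        have hdegt : ∀ x : t, (G.induce t).degree x = G.degree x.val := by
          intro x
          rw [degree_induce, ← SimpleGraph.card_neighborFinset_eq_degree]
          congr 1
          apply Finset.filter_true_of_mem
          intro w' hw'
          rw [SimpleGraph.mem_neighborFinset] at hw'
          intro hws'
          exact x.2 ((hclosed _ _ hw').mpr hws')
        have hcards : Fintype.card s = (Finset.univ.filter (fun x => x ∈ s)).card :=
          Fintype.card_subtype _
        have hcardt : Fintype.card t = (Finset.univ.filter (fun x => ¬ x ∈ s)).card :=
          Fintype.card_subtype _
        have hcsum : Fintype.card s + Fintype.card t = n := by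
          rw [hcards, hcardt, Finset.card_filter_add_card_filter_not,
            Finset.card_univ, hcard]
        have hspos : 0 < Fintype.card s := Fintype.card_pos_iff.mpr ⟨⟨v, hvs⟩⟩
        have htpos : 0 < Fintype.card t := Fintype.card_pos_iff.mpr ⟨⟨w, hws⟩⟩
        have hIHs := IH (Fintype.card s) (by omega) s (G.induce s) rfl
          (fun h => hfree (cpo_induce h))
        have hIHt := IH (Fintype.card t) (by omega) t (G.induce t) rfl
          (fun h => hfree (cpo_induce h))
        have hsplit : ∑ u, G.degree u
            = ∑ x : s, G.degree x.val + ∑ x : t, G.degree x.val :=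
          (Fintype.sum_subtype_add_sum_subtype (fun x => x ∈ s) (fun u => G.degree u)).symm
        have h2s : ∑ x : s, G.degree x.val = 2 * (G.induce s).edgeSet.ncard :=
          calc ∑ x : s, G.degree x.val = ∑ x : s, (G.induce s).degree x :=
                Finset.sum_congr rfl fun x _ => (hdegs x).symm
            _ = 2 * (G.induce s).edgeSet.ncard := (two_mul_ncard _).symm
        have h2t : ∑ x : t, G.degree x.val = 2 * (G.induce t).edgeSet.ncard :=
          calc ∑ x : t, G.degree x.val = ∑ x : t, (G.induce t).degree x :=
                Finset.sum_congr rfl fun x _ => (hdegt x).symm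
            _ = 2 * (G.induce t).edgeSet.ncard := (two_mul_ncard _).symm
        have heq : (k - 2) * Fintype.card s + (k - 2) * Fintype.card t = (k - 2) * n := by
          rw [← Nat.mul_add, hcsum]
        rw [hsplit, h2s, h2t]
        linarith

end EGaux

/-- Erdős–Gallai: every `P_k`-free graph on `n` vertices has at most `(k-2)n/2` edges. -/
theorem stmt_2 (k n : ℕ) (hk : 1 ≤ k) (hn : 1 ≤ n) (G : SimpleGraph (Fin n))
    (hG : ¬ ContainsPathOn G k) :
    (G.edgeSet.ncard : ℝ) ≤ ((k : ℝ) - 2) * n / 2 := by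
  classical
  by_cases hk2 : 2 ≤ k
  · have hnat := EGaux.main k hk2 n (Fin n) G (by simp) hG
    have hcast : ((k - 2 : ℕ) : ℝ) = (k : ℝ) - 2 := by
      push_cast [hk2]
      ring
    have h2 : (2 : ℝ) * (G.edgeSet.ncard : ℝ) ≤ ((k - 2 : ℕ) : ℝ) * (n : ℝ) := by
      exact_mod_cast hnat
    rw [hcast] at h2
    linarith
  · have hk1 : k = 1 := by omega
    subst hk1
    haveI : Nonempty (Fin n) := ⟨⟨0, by omega⟩⟩
    exact absurd EGaux.cpo_one hG
end

section
/- Let K_n be edge-colored by c, and let U, W be disjoint vertex subsets with |U| = u ≥ 1 and |W| = w ≥ 1. Suppose there exist representing subgraphs L¹ and L² of (K_n, c) such that U has at least s common neighbors in L¹ and W has at least s + s·u common neighbors in L². Then there exists a representing subgraph L of (K_n, c) in which U has at least s common neighbors and W has at least s common neighbors. -/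
open Finset

/-- `L` is a representing subgraph of `(K_n, c)`: for every (non-loop) edge of `K_n`,
`L` contains exactly one edge of the same color. -/
def IsRepresenting (n : ℕ) (c : Sym2 (Fin n) → ℕ) (L : SimpleGraph (Fin n)) : Prop :=
  ∀ e : Sym2 (Fin n), ¬ e.IsDiag → ∃! f, f ∈ L.edgeSet ∧ c f = c e

/-- The common neighborhood of the vertex set `U` in the graph `L`. -/
def commonNbrs {n : ℕ} (L : SimpleGraph (Fin n)) (U : Finset (Fin n)) : Set (Fin n) :=
  {v | ∀ u ∈ U, L.Adj u v}

/-- Mix of two graphs guided by a color set: take `L₁`'s edges on colors in `C`,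
`L₂`'s edges otherwise. -/
def mixGraph {n : ℕ} (c : Sym2 (Fin n) → ℕ) (C : Finset ℕ)
    (L₁ L₂ : SimpleGraph (Fin n)) : SimpleGraph (Fin n) where
  Adj x y := (c s(x, y) ∈ C ∧ L₁.Adj x y) ∨ (c s(x, y) ∉ C ∧ L₂.Adj x y)
  symm := by
    refine ⟨fun x y h => ?_⟩
    rw [Sym2.eq_swap] at h
    exact h.imp (fun ⟨a, b⟩ => ⟨a, b.symm⟩) (fun ⟨a, b⟩ => ⟨a, b.symm⟩)
  loopless := by
    refine ⟨fun x h => ?_⟩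
    rcases h with ⟨_, h⟩ | ⟨_, h⟩
    · exact L₁.loopless.irrefl x h
    · exact L₂.loopless.irrefl x h

lemma mixGraph_adj {n : ℕ} (c : Sym2 (Fin n) → ℕ) (C : Finset ℕ)
    (L₁ L₂ : SimpleGraph (Fin n)) (x y : Fin n) :
    (mixGraph c C L₁ L₂).Adj x y ↔
      (c s(x, y) ∈ C ∧ L₁.Adj x y) ∨ (c s(x, y) ∉ C ∧ L₂.Adj x y) := Iff.rfl

lemma mixGraph_mem_edgeSet {n : ℕ} (c : Sym2 (Fin n) → ℕ) (C : Finset ℕ)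
    (L₁ L₂ : SimpleGraph (Fin n)) (f : Sym2 (Fin n)) :
    f ∈ (mixGraph c C L₁ L₂).edgeSet ↔
      (c f ∈ C ∧ f ∈ L₁.edgeSet) ∨ (c f ∉ C ∧ f ∈ L₂.edgeSet) := by
  induction f using Sym2.ind with
  | _ a b =>
    simp only [SimpleGraph.mem_edgeSet, mixGraph_adj]

lemma mixGraph_isRepresenting {n : ℕ} (c : Sym2 (Fin n) → ℕ) (C : Finset ℕ)
    (L₁ L₂ : SimpleGraph (Fin n))
    (hL₁ : IsRepresenting n c L₁) (hL₂ : IsRepresenting n c L₂) :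
    IsRepresenting n c (mixGraph c C L₁ L₂) := by
  intro e he
  by_cases hc : c e ∈ C
  · obtain ⟨f, ⟨hf, hfc⟩, huniq⟩ := hL₁ e he
    refine ⟨f, ⟨(mixGraph_mem_edgeSet c C L₁ L₂ f).mpr (Or.inl ⟨hfc ▸ hc, hf⟩), hfc⟩, ?_⟩
    intro f' ⟨hf', hfc'⟩
    rcases (mixGraph_mem_edgeSet c C L₁ L₂ f').mp hf' with ⟨_, h1⟩ | ⟨hn, _⟩
    · exact huniq f' ⟨h1, hfc'⟩
    · exact absurd (hfc' ▸ hc) hn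
  · obtain ⟨f, ⟨hf, hfc⟩, huniq⟩ := hL₂ e he
    refine ⟨f, ⟨(mixGraph_mem_edgeSet c C L₁ L₂ f).mpr (Or.inr ⟨hfc ▸ hc, hf⟩), hfc⟩, ?_⟩
    intro f' ⟨hf', hfc'⟩
    rcases (mixGraph_mem_edgeSet c C L₁ L₂ f').mp hf' with ⟨hn, _⟩ | ⟨_, h2⟩
    · exact absurd (hfc' ▸ hn) hc
    · exact huniq f' ⟨h2, hfc'⟩

theorem stmt_3 (n u w s : ℕ) (hu : 1 ≤ u) (hw : 1 ≤ w)
    (c : Sym2 (Fin n) → ℕ) (U W : Finset (Fin n)) (hUW : Disjoint U W)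
    (hU : U.card = u) (hW : W.card = w)
    (L₁ L₂ : SimpleGraph (Fin n))
    (hL₁ : IsRepresenting n c L₁) (hL₂ : IsRepresenting n c L₂)
    (h₁ : s ≤ (commonNbrs L₁ U).ncard)
    (h₂ : s + s * u ≤ (commonNbrs L₂ W).ncard) :
    ∃ L : SimpleGraph (Fin n), IsRepresenting n c L ∧
      s ≤ (commonNbrs L U).ncard ∧ s ≤ (commonNbrs L W).ncard := by
  classical
  -- choose a set S of s common neighbors of U in L₁
  have hAcard : s ≤ ((commonNbrs L₁ U).toFinite.toFinset).card := by
    rwa [Set.ncard_eq_toFinset_card _ (commonNbrs L₁ U).toFinite] at h₁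
  obtain ⟨S, hSA, hScard⟩ := Finset.exists_subset_card_eq hAcard
  have hSmem : ∀ y ∈ S, y ∈ commonNbrs L₁ U := fun y hy =>
    (Set.Finite.mem_toFinset _).mp (hSA hy)
  -- the colors of the edges between U and S
  set C : Finset ℕ := (U ×ˢ S).image (fun p => c s(p.1, p.2)) with hCdef
  have hCcard : C.card ≤ s * u := by
    calc C.card ≤ (U ×ˢ S).card := Finset.card_image_le
    _ = u * s := by rw [Finset.card_product, hU, hScard]
    _ = s * u := Nat.mul_comm _ _
  set L := mixGraph c C L₁ L₂ with hLdef
  refine ⟨L, mixGraph_isRepresenting c C L₁ L₂ hL₁ hL₂, ?_, ?_⟩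
  · -- S ⊆ commonNbrs L U
    have hsub : (↑S : Set (Fin n)) ⊆ commonNbrs L U := by
      intro y hy x hx
      have hy' : y ∈ S := hy
      exact Or.inl ⟨Finset.mem_image.mpr ⟨(x, y), Finset.mem_product.mpr ⟨hx, hy'⟩, rfl⟩,
        hSmem y hy' x hx⟩
    calc s = S.card := hScard.symm
    _ = (↑S : Set (Fin n)).ncard := (Set.ncard_coe_finset S).symm
    _ ≤ (commonNbrs L U).ncard := Set.ncard_le_ncard hsub (Set.toFinite _)
  · -- common neighbors of W in L₂ whose colors avoid C
    set N := (commonNbrs L₂ W).toFinite.toFinset with hNdef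
    have hNmem : ∀ v, v ∈ N → v ∈ commonNbrs L₂ W := fun v =>
      (Set.Finite.mem_toFinset _).mp
    have hNcard : s + s * u ≤ N.card := by
      rwa [Set.ncard_eq_toFinset_card _ (commonNbrs L₂ W).toFinite] at h₂
    have hvnotW : ∀ v ∈ N, v ∉ W := by
      intro v hv hvW
      exact L₂.loopless.irrefl v (hNmem v hv v hvW)
    set Bad := N.filter (fun v => ∃ x, x ∈ W ∧ c s(x, v) ∈ C) with hBaddef
    -- at most C.card bad vertices, by injectivity of the coloring on L₂'s edges
    have hBadcard : Bad.card ≤ C.card := by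
      apply Finset.card_le_card_of_injOn
        (fun v => if h : ∃ x, x ∈ W ∧ c s(x, v) ∈ C then c s(h.choose, v) else 0)
      · intro v hv
        have h := (Finset.mem_filter.mp hv).2
        simp only [dif_pos h]
        exact h.choose_spec.2
      · intro v hv v' hv' heq
        have hvN := (Finset.mem_filter.mp hv).1
        have hv'N := (Finset.mem_filter.mp hv').1
        have h := (Finset.mem_filter.mp hv).2
        have h' := (Finset.mem_filter.mp hv').2
        simp only [dif_pos h, dif_pos h'] at heq
        set x := h.choose with hxdef
        set x' := h'.choose with hx'def
        have hxW : x ∈ W := h.choose_spec.1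
        have hx'W : x' ∈ W := h'.choose_spec.1
        have hadj : L₂.Adj x v := hNmem v hvN x hxW
        have hadj' : L₂.Adj x' v' := hNmem v' hv'N x' hx'W
        have hnd : ¬ (s(x, v) : Sym2 (Fin n)).IsDiag := by
          rw [Sym2.isDiag_iff_proj_eq]
          exact hadj.ne
        obtain ⟨f, _, huniq⟩ := hL₂ s(x, v) hnd
        have e1 : s(x, v) = f := huniq _ ⟨L₂.mem_edgeSet.mpr hadj, rfl⟩
        have e2 : s(x', v') = f := huniq _ ⟨L₂.mem_edgeSet.mpr hadj', heq.symm⟩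
        have : s(x', v') = s(x, v) := e2.trans e1.symm
        rw [Sym2.eq_iff] at this
        rcases this with ⟨_, h2⟩ | ⟨h1, h2⟩
        · exact h2.symm
        · exact absurd (h1 ▸ hx'W) (hvnotW v hvN)
    have hsub : (↑(N \ Bad) : Set (Fin n)) ⊆ commonNbrs L W := by
      intro v hv x hx
      have hv' : v ∈ N \ Bad := hv
      obtain ⟨hvN, hvB⟩ := Finset.mem_sdiff.mp hv'
      have h2 : L₂.Adj x v := hNmem v hvN x hx
      have hnc : c s(x, v) ∉ C := by
        intro hcC
        exact hvB (Finset.mem_filter.mpr ⟨hvN, ⟨x, hx, hcC⟩⟩)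
      exact Or.inr ⟨hnc, h2⟩
    have hcard : s ≤ (N \ Bad).card := by
      have hBN : Bad ⊆ N := Finset.filter_subset _ N
      have := Finset.card_sdiff_of_subset hBN
      omega
    calc s ≤ (N \ Bad).card := hcard
    _ = (↑(N \ Bad) : Set (Fin n)).ncard := (Set.ncard_coe_finset _).symm
    _ ≤ (commonNbrs L W).ncard := Set.ncard_le_ncard hsub (Set.toFinite _)
end

section
/- Let F = ∪_{i=1}^k P_{t_i} be a linear forest with k ≥ 2 and t_i ≥ 2 for all i, with f = |V(F)| = Σ t_i. Let F₁ = ∪_{i∈L} P_{t_i} for some L ⊆ [k] with Σ_{i∈L} ⌊t_i/2⌋ ≥ 2, and F₂ = F − F₁. Let G be an F-free graph on n vertices containing a copy of F₁, and suppose e(G) − binom(|V(F₁)|, 2) − ex(n − |V(F₁)|, F₂) ≥ (Σ_{i∈L} ⌊t_i/2⌋ − 7/4)·n. Then for n sufficiently large, every copy of F₁ in G contains a vertex subset U of size Σ_{i∈L} ⌊t_i/2⌋ − 1 whose common neighborhood in V(G) ∖ U has size at least 2f² + 8f. -/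
open Finset

/-- `G` contains the linear forest whose components are paths on `t i` vertices, `i : ι`:
there are pairwise-disjoint paths in `G`, one on `t i` vertices for each `i`. -/
def ContainsLF {V : Type*} {ι : Type*} (G : SimpleGraph V) (t : ι → ℕ) : Prop :=
  ∃ p : (i : ι) → Fin (t i) → V,
    Function.Injective (fun q : Σ i, Fin (t i) => p q.1 q.2) ∧
    ∀ (i : ι) (j : ℕ) (h : j + 1 < t i),
      G.Adj (p i ⟨j, Nat.lt_of_succ_lt h⟩) (p i ⟨j + 1, h⟩)

/-- Turán number of the linear forest with path orders `t i` on `m` vertices. -/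
noncomputable def exLF (m : ℕ) {ι : Type*} (t : ι → ℕ) : ℕ :=
  sSup {N | ∃ G : SimpleGraph (Fin m), ¬ ContainsLF G t ∧ G.edgeSet.ncard = N}

lemma adjPairs_card {V : Type*} [Fintype V] [DecidableEq V] (G : SimpleGraph V)
    [DecidableRel G.Adj] (s u : Finset V) :
    ((s ×ˢ u).filter fun q => G.Adj q.1 q.2).card
      = ∑ a ∈ s, (u.filter fun b => G.Adj a b).card := by
  have h : ((s ×ˢ u).filter fun q => G.Adj q.1 q.2)
      = s.biUnion (fun a => (u.filter fun b => G.Adj a b).image (fun b => (a, b))) := by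
    ext q
    simp only [mem_filter, mem_product, mem_biUnion, mem_image]
    constructor
    · rintro ⟨⟨h1, h2⟩, h3⟩
      exact ⟨q.1, h1, q.2, ⟨h2, h3⟩, rfl⟩
    · rintro ⟨a, ha, b, ⟨hb, hab⟩, rfl⟩
      exact ⟨⟨ha, hb⟩, hab⟩
  rw [h, card_biUnion]
  · refine Finset.sum_congr rfl fun a _ => ?_
    exact card_image_of_injective _ (fun b c h => by simpa using h)
  · intro a _ b _ hab
    simp only [disjoint_left, mem_image]
    rintro q ⟨x, _, rfl⟩ ⟨y, _, h⟩
    exact hab (by simpa using (congrArg Prod.fst h).symm)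

lemma adjPairs_total {V : Type*} [Fintype V] [DecidableEq V] (G : SimpleGraph V)
    [DecidableRel G.Adj] :
    (((univ : Finset V) ×ˢ univ).filter fun q => G.Adj q.1 q.2).card
      = 2 * G.edgeFinset.card := by
  rw [adjPairs_card, ← SimpleGraph.sum_degrees_eq_twice_card_edges]
  refine Finset.sum_congr rfl fun a _ => ?_
  rw [← SimpleGraph.card_neighborFinset_eq_degree, SimpleGraph.neighborFinset_eq_filter]

lemma edge_ncard {V : Type*} [Fintype V] (Γ : SimpleGraph V) [Fintype Γ.edgeSet] :
    Γ.edgeSet.ncard = Γ.edgeFinset.card := by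
  rw [SimpleGraph.edgeFinset, Set.ncard_eq_toFinset_card']

lemma exLF_le (m : ℕ) {ι : Type*} (t : ι → ℕ) {Γ : SimpleGraph (Fin m)}
    (hΓ : ¬ ContainsLF Γ t) : Γ.edgeSet.ncard ≤ exLF m t := by
  classical
  refine le_csSup ⟨m.choose 2, ?_⟩ ⟨Γ, hΓ, rfl⟩
  rintro N ⟨Γ', _, rfl⟩
  rw [edge_ncard]
  simpa using Γ'.card_edgeFinset_le_card_choose_two

lemma combineLF {V : Type*} (G : SimpleGraph V) {k : ℕ} {t : Fin k → ℕ} {L : Finset (Fin k)}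
    (p : (i : {i // i ∈ L}) → Fin (t i.1) → V)
    (hpinj : Function.Injective fun q : Σ i : {i // i ∈ L}, Fin (t i.1) => p q.1 q.2)
    (hpadj : ∀ (i : {i // i ∈ L}) (j : ℕ) (h : j + 1 < t i.1),
      G.Adj (p i ⟨j, Nat.lt_of_succ_lt h⟩) (p i ⟨j + 1, h⟩))
    {m : ℕ} (ι : Fin m → V) (hιinj : Function.Injective ι)
    (hdisj : ∀ (a : Fin m) (i : {i // i ∈ L}) (j : Fin (t i.1)), ι a ≠ p i j)
    (hq : ContainsLF (SimpleGraph.comap ι G) (fun i : {i // i ∉ L} => t i.1)) :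
    ContainsLF G t := by
  obtain ⟨q, hqinj, hqadj⟩ := hq
  refine ⟨fun i => if h : i ∈ L then p ⟨i, h⟩ else fun j => ι (q ⟨i, h⟩ j), ?_, ?_⟩
  · rintro ⟨i1, j1⟩ ⟨i2, j2⟩ hab
    simp only at hab
    by_cases h1 : i1 ∈ L <;> by_cases h2 : i2 ∈ L
    · rw [dif_pos h1, dif_pos h2] at hab
      have hs := hpinj (a₁ := ⟨⟨i1, h1⟩, j1⟩) (a₂ := ⟨⟨i2, h2⟩, j2⟩) hab
      obtain ⟨hfst, hsnd⟩ := Sigma.mk.inj_iff.mp hs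
      have hi : i1 = i2 := congrArg Subtype.val hfst
      subst hi
      have hj : j1 = j2 := eq_of_heq hsnd
      subst hj
      rfl
    · rw [dif_pos h1, dif_neg h2] at hab
      exact absurd hab.symm (hdisj _ _ _)
    · rw [dif_neg h1, dif_pos h2] at hab
      exact absurd hab (hdisj _ _ _)
    · rw [dif_neg h1, dif_neg h2] at hab
      have hs := hqinj (a₁ := ⟨⟨i1, h1⟩, j1⟩) (a₂ := ⟨⟨i2, h2⟩, j2⟩) (hιinj hab)
      obtain ⟨hfst, hsnd⟩ := Sigma.mk.inj_iff.mp hs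
      have hi : i1 = i2 := congrArg Subtype.val hfst
      subst hi
      have hj : j1 = j2 := eq_of_heq hsnd
      subst hj
      rfl
  · intro i j h
    by_cases hi : i ∈ L
    · simp only [dif_pos hi]
      exact hpadj ⟨i, hi⟩ j h
    · simp only [dif_neg hi]
      exact hqadj ⟨i, hi⟩ j h

set_option maxHeartbeats 1000000 in
theorem stmt_6 (k : ℕ) (hk : 2 ≤ k) (t : Fin k → ℕ) (ht : ∀ i, 2 ≤ t i)
    (L : Finset (Fin k)) (hL : 2 ≤ ∑ i ∈ L, t i / 2) :
    ∃ N : ℕ, ∀ n : ℕ, N ≤ n → ∀ G : SimpleGraph (Fin n),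
      -- `G` is `F`-free
      ¬ ContainsLF G t →
      -- the edge-count hypothesis
      ((((∑ i ∈ L, t i / 2 : ℕ) : ℝ) - 7/4) * n ≤
        (G.edgeSet.ncard : ℝ) - (Nat.choose (∑ i ∈ L, t i) 2 : ℝ) -
          (exLF (n - ∑ i ∈ L, t i) (fun i : {i // i ∉ L} => t i.1) : ℝ)) →
      -- every copy of `F₁ = ∪_{i ∈ L} P_{t_i}` in `G` ...
      ∀ p : (i : {i // i ∈ L}) → Fin (t i.1) → Fin n,
        Function.Injective
          (fun q : Σ i : {i // i ∈ L}, Fin (t i.1) => p q.1 q.2) →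
        (∀ (i : {i // i ∈ L}) (j : ℕ) (h : j + 1 < t i.1),
          G.Adj (p i ⟨j, Nat.lt_of_succ_lt h⟩) (p i ⟨j + 1, h⟩)) →
        -- ... contains a set `U` of size `Σ_{i∈L} ⌊t_i/2⌋ - 1` whose common
        -- neighborhood in `V(G) ∖ U` has at least `2f² + 8f` vertices
        ∃ U : Finset (Fin n),
          (∀ x ∈ U, ∃ i j, p i j = x) ∧
          U.card = (∑ i ∈ L, t i / 2) - 1 ∧
          2 * (∑ i, t i)^2 + 8 * (∑ i, t i) ≤
            {v : Fin n | v ∉ U ∧ ∀ u ∈ U, G.Adj u v}.ncard := by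
  classical
  refine ⟨4 * (∑ i ∈ L, t i) *
      (((∑ i ∈ L, t i).choose ((∑ i ∈ L, t i / 2) - 1)) *
        (2 * (∑ i, t i)^2 + 8 * (∑ i, t i))) +
      4 * (∑ i ∈ L, t i) * (∑ i ∈ L, t i) + (∑ i ∈ L, t i), ?_⟩
  intro n hn G hGF hEdge p hpinj hpadj
  set s₁ := ∑ i ∈ L, t i / 2 with hs₁def
  set f₁ := ∑ i ∈ L, t i with hf₁def
  set f := ∑ i, t i with hfdef
  set M := 2 * f ^ 2 + 8 * f with hMdef
  set K := f₁.choose (s₁ - 1) with hKdef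
  set m := n - f₁ with hmdef
  set t₂ := fun i : {i // i ∉ L} => t i.1 with ht₂def
  have hs₁f₁ : s₁ ≤ f₁ := Finset.sum_le_sum fun i _ => Nat.div_le_self _ _
  have hf₁pos : 0 < f₁ := lt_of_lt_of_le (by omega) hs₁f₁
  set P : Finset (Fin n) :=
    Finset.image (fun q : Σ i : {i // i ∈ L}, Fin (t i.1) => p q.1 q.2) univ with hPdef
  have hPcard : P.card = f₁ := by
    rw [hPdef, Finset.card_image_of_injective _ hpinj, card_univ, Fintype.card_sigma]
    simp only [Fintype.card_fin]
    rw [hf₁def]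
    exact Finset.sum_coe_sort L t
  have hmemP : ∀ (i) (j), p i j ∈ P := fun i j =>
    Finset.mem_image.2 ⟨⟨i, j⟩, mem_univ _, rfl⟩
  have hcardPc : Fintype.card {x // x ∈ Pᶜ} = m := by
    simp [Fintype.card_coe, Finset.card_compl, hPcard, hmdef]
  let ε : {x // x ∈ Pᶜ} ≃ Fin m := Fintype.equivFinOfCardEq hcardPc
  set ι : Fin m → Fin n := fun a => (ε.symm a : Fin n) with hιdef
  have hιnot : ∀ a, ι a ∉ P := fun a => Finset.mem_compl.1 (ε.symm a).2
  have hιinj : Function.Injective ι := fun a b hab => ε.symm.injective (Subtype.ext hab)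
  set H := SimpleGraph.comap ι G with hHdef
  have hHfree : ¬ ContainsLF H t₂ := fun hq =>
    hGF (combineLF G p hpinj hpadj ι hιinj
      (fun a i j hne => hιnot a (by rw [hne]; exact hmemP i j)) hq)
  have hHle : H.edgeSet.ncard ≤ exLF m t₂ := exLF_le m t₂ hHfree
  -- counting
  set Ad := ((univ : Finset (Fin n)) ×ˢ univ).filter (fun q => G.Adj q.1 q.2) with hAdDef
  have hAd : Ad.card = 2 * G.edgeFinset.card := adjPairs_total G
  set T := ∑ a ∈ Pᶜ, ((P.filter fun b => G.Adj a b).card) with hTdef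
  have hOPcard : ((Pᶜ ×ˢ P).filter fun q => G.Adj q.1 q.2).card = T := adjPairs_card G Pᶜ P
  have hPOcard : ((P ×ˢ Pᶜ).filter fun q => G.Adj q.1 q.2).card = T := by
    rw [← hOPcard]
    apply Finset.card_bij' (fun q _ => Prod.swap q) (fun q _ => Prod.swap q)
    · intro q hq
      simp only [mem_filter, mem_product] at hq ⊢
      exact ⟨⟨hq.1.2, hq.1.1⟩, hq.2.symm⟩
    · intro q hq
      simp only [mem_filter, mem_product] at hq ⊢
      exact ⟨⟨hq.1.2, hq.1.1⟩, hq.2.symm⟩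
    · intro q _; simp
    · intro q _; simp
  have hPP : ((P ×ˢ P).filter fun q => G.Adj q.1 q.2).card ≤ f₁ * f₁ := by
    calc ((P ×ˢ P).filter fun q => G.Adj q.1 q.2).card ≤ (P ×ˢ P).card :=
          card_filter_le _ _
      _ = f₁ * f₁ := by rw [card_product, hPcard]
  have hinj2 : Function.Injective (fun q : Fin m × Fin m => (ι q.1, ι q.2)) := by
    intro a b hq
    have h1 := congrArg Prod.fst hq
    have h2 := congrArg Prod.snd hq
    exact Prod.ext (hιinj h1) (hιinj h2)
  have hOO : ((Pᶜ ×ˢ Pᶜ).filter fun q => G.Adj q.1 q.2).card ≤ 2 * exLF m t₂ := by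
    have himg : ((Pᶜ ×ˢ Pᶜ).filter fun q => G.Adj q.1 q.2)
        = (((univ : Finset (Fin m)) ×ˢ univ).filter fun q => H.Adj q.1 q.2).image
            (fun q => (ι q.1, ι q.2)) := by
      ext r
      simp only [mem_filter, mem_product, mem_image, mem_compl, mem_univ, true_and]
      constructor
      · rintro ⟨⟨h1, h2⟩, h3⟩
        refine ⟨(ε ⟨r.1, Finset.mem_compl.2 h1⟩, ε ⟨r.2, Finset.mem_compl.2 h2⟩), ?_, ?_⟩
        · show G.Adj (ι _) (ι _)
          have e1 : ι (ε ⟨r.1, Finset.mem_compl.2 h1⟩) = r.1 := by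
            simp [hιdef]
          have e2 : ι (ε ⟨r.2, Finset.mem_compl.2 h2⟩) = r.2 := by
            simp [hιdef]
          rw [e1, e2]; exact h3
        · have e1 : ι (ε ⟨r.1, Finset.mem_compl.2 h1⟩) = r.1 := by simp [hιdef]
          have e2 : ι (ε ⟨r.2, Finset.mem_compl.2 h2⟩) = r.2 := by simp [hιdef]
          exact Prod.ext e1 e2
      · rintro ⟨q, hadj, rfl⟩
        exact ⟨⟨hιnot _, hιnot _⟩, hadj⟩
    rw [himg, Finset.card_image_of_injective _ hinj2, adjPairs_total H]
    have := edge_ncard H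
    omega
  have hsplit : Ad ⊆ ((P ×ˢ P).filter fun q => G.Adj q.1 q.2)
      ∪ ((P ×ˢ Pᶜ).filter fun q => G.Adj q.1 q.2)
      ∪ ((Pᶜ ×ˢ P).filter fun q => G.Adj q.1 q.2)
      ∪ ((Pᶜ ×ˢ Pᶜ).filter fun q => G.Adj q.1 q.2) := by
    intro q hq
    rw [hAdDef, mem_filter] at hq
    simp only [mem_union, mem_filter, mem_product, mem_compl]
    by_cases h1 : q.1 ∈ P <;> by_cases h2 : q.2 ∈ P
    · exact Or.inl (Or.inl (Or.inl ⟨⟨h1, h2⟩, hq.2⟩))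
    · exact Or.inl (Or.inl (Or.inr ⟨⟨h1, h2⟩, hq.2⟩))
    · exact Or.inl (Or.inr ⟨⟨h1, h2⟩, hq.2⟩)
    · exact Or.inr ⟨⟨h1, h2⟩, hq.2⟩
  have hcount : 2 * G.edgeFinset.card ≤ f₁ * f₁ + T + T + 2 * exLF m t₂ := by
    have h4 : Ad.card ≤ ((P ×ˢ P).filter fun q => G.Adj q.1 q.2).card
        + ((P ×ˢ Pᶜ).filter fun q => G.Adj q.1 q.2).card
        + ((Pᶜ ×ˢ P).filter fun q => G.Adj q.1 q.2).card
        + ((Pᶜ ×ˢ Pᶜ).filter fun q => G.Adj q.1 q.2).card := by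
      refine (card_le_card hsplit).trans ?_
      refine (card_union_le _ _).trans ?_
      refine Nat.add_le_add_right ?_ _
      refine (card_union_le _ _).trans ?_
      exact Nat.add_le_add_right (card_union_le _ _) _
    rw [hAd] at h4
    omega
  rw [edge_ncard G] at hEdge
  have hTreal : ((s₁ : ℝ) - 7/4) * n - (f₁ : ℝ) * f₁ ≤ (T : ℝ) := by
    have h1 : (2:ℝ) * G.edgeFinset.card
        ≤ (f₁:ℝ) * f₁ + T + T + 2 * exLF m t₂ := by exact_mod_cast hcount
    have h3 : (0:ℝ) ≤ ((f₁.choose 2 : ℕ) : ℝ) := by positivity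
    nlinarith [hEdge]
  -- pigeonhole
  set B := Pᶜ.filter (fun a => s₁ - 1 ≤ (P.filter fun b => G.Adj a b).card) with hBdef
  have hTB : T ≤ B.card * f₁ + n * (s₁ - 2) := by
    have hBsub : B ⊆ Pᶜ := filter_subset _ _
    have hsum : ∑ a ∈ Pᶜ \ B, (P.filter fun b => G.Adj a b).card
        + ∑ a ∈ B, (P.filter fun b => G.Adj a b).card = T := Finset.sum_sdiff hBsub
    have h1 : ∑ a ∈ B, (P.filter fun b => G.Adj a b).card ≤ B.card * f₁ :=
      (Finset.sum_le_card_nsmul _ _ f₁ fun a _ =>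
        (card_filter_le _ _).trans_eq hPcard).trans_eq (by simp [smul_eq_mul])
    have h2 : ∑ a ∈ Pᶜ \ B, (P.filter fun b => G.Adj a b).card ≤ n * (s₁ - 2) := by
      refine (Finset.sum_le_card_nsmul _ _ (s₁ - 2) fun a ha => ?_).trans ?_
      · obtain ⟨haP, haB⟩ := mem_sdiff.1 ha
        have hnot : ¬ (s₁ - 1 ≤ (P.filter fun b => G.Adj a b).card) := fun hc =>
          haB (mem_filter.2 ⟨haP, hc⟩)
        omega
      · simp only [smul_eq_mul]
        have hcle : (Pᶜ \ B).card ≤ n := (card_le_univ _).trans_eq (by simp)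
        exact Nat.mul_le_mul_right _ hcle
    omega
  have hBKM : K * M ≤ B.card := by
    have hTBr : (T:ℝ) ≤ (B.card : ℝ) * f₁ + n * ((s₁:ℝ) - 2) := by
      have h2 : ((s₁ - 2 : ℕ) : ℝ) = (s₁ : ℝ) - 2 := by
        have : (2:ℕ) ≤ s₁ := hL
        push_cast [Nat.cast_sub this]
        ring
      calc (T:ℝ) ≤ ((B.card * f₁ + n * (s₁ - 2) : ℕ) : ℝ) := by exact_mod_cast hTB
        _ = (B.card : ℝ) * f₁ + n * ((s₁:ℝ) - 2) := by push_cast [h2]; ring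
    have hnr : (4 * (f₁:ℝ) * ((K:ℝ) * M) + 4 * f₁ * f₁ + f₁ : ℝ) ≤ n := by
      exact_mod_cast hn
    have hf₁r : (0:ℝ) < f₁ := by exact_mod_cast hf₁pos
    have hKMr : ((K:ℝ) * M ≤ B.card) := by nlinarith [hTreal, hTBr, hnr, hf₁r]
    exact_mod_cast hKMr
  set g : Fin n → Finset (Fin n) := fun v =>
    if h : s₁ - 1 ≤ (P.filter fun b => G.Adj v b).card then
      (Finset.exists_subset_card_eq h).choose else ∅ with hgdef
  have hmaps : ∀ v ∈ B, g v ∈ P.powersetCard (s₁ - 1) := by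
    intro v hv
    have hd := (mem_filter.1 hv).2
    rw [mem_powersetCard]
    rw [hgdef]
    simp only [dif_pos hd]
    obtain ⟨hsub, hcard⟩ := (Finset.exists_subset_card_eq hd).choose_spec
    exact ⟨hsub.trans (filter_subset _ _), hcard⟩
  have hne : (P.powersetCard (s₁ - 1)).Nonempty := by
    rw [Finset.powersetCard_nonempty, hPcard]
    omega
  obtain ⟨U, hUmem, hUfiber⟩ :=
    Finset.exists_le_card_fiber_of_mul_le_card_of_maps_to hmaps hne
      (by rw [card_powersetCard, hPcard]; exact hBKM)
  obtain ⟨hUP, hUcard⟩ := mem_powersetCard.1 hUmem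
  refine ⟨U, ?_, hUcard, ?_⟩
  · intro x hx
    obtain ⟨q, -, rfl⟩ := mem_image.1 (hUP hx)
    exact ⟨q.1, q.2, rfl⟩
  · refine hUfiber.trans ?_
    rw [← Set.ncard_coe_finset]
    refine Set.ncard_le_ncard ?_ (Set.toFinite _)
    intro v hv
    rw [Finset.mem_coe, mem_filter] at hv
    obtain ⟨hvB, hgv⟩ := hv
    have hvPc : v ∈ Pᶜ := (mem_filter.1 hvB).1
    have hd := (mem_filter.1 hvB).2
    have hUsub : U ⊆ P.filter fun b => G.Adj v b := by
      rw [← hgv, hgdef]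
      simp only [dif_pos hd]
      exact (Finset.exists_subset_card_eq hd).choose_spec.1
    constructor
    · intro hvU
      exact (Finset.mem_compl.1 hvPc) (hUP hvU)
    · intro u hu
      exact ((mem_filter.1 (hUsub hu)).2).symm
end

section
/- Let F = ∪_{i=1}^k P_{t_i} be a linear forest with k ≥ 2, t_i ≥ 2 for all i, and at least one t_i even. Set s = Σ_{i=1}^k ⌊t_i/2⌋. Then for all sufficiently large n, there exists an edge-coloring of K_n with binom(s−2, 2) + (s−2)(n−s+2) + 1 + ε colors containing no rainbow copy of F, where ε = 1 if exactly one t_i is even and ε = 0 if at least two t_i are even. (Lower bound construction for AR(n,F).) -/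
open Finset

/-- Number of colors used by the edge-coloring `c` of `K_n`. -/
def colorCount (n : ℕ) (c : Sym2 (Fin n) → ℕ) : ℕ :=
  ((Finset.univ.filter fun e : Sym2 (Fin n) => ¬ e.IsDiag).image c).card

/-- `K_n` colored by `c` contains a rainbow copy of the linear forest
with path orders `t i`, `i : ι`: pairwise-disjoint paths all of whose
edges receive pairwise distinct colors. -/
def RainbowLF (n : ℕ) (c : Sym2 (Fin n) → ℕ) {ι : Type*} (t : ι → ℕ) : Prop :=
  ∃ p : (i : ι) → Fin (t i) → Fin n,
    Function.Injective (fun q : Σ i, Fin (t i) => p q.1 q.2) ∧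
    Function.Injective (fun q : Σ i : ι, {j : ℕ // j + 1 < t i} =>
      c s(p q.1 ⟨q.2.1, Nat.lt_of_succ_lt q.2.2⟩, p q.1 ⟨q.2.1 + 1, q.2.2⟩))

def myF (s ε n x y : ℕ) : ℕ :=
  if min x y < s - 2 then 2 + min x y * n + max x y
  else if ε = 1 ∧ min x y = s - 2 ∧ max x y = s - 1 then 1 else 0

lemma myF_comm (s ε n x y : ℕ) : myF s ε n x y = myF s ε n y x := by
  unfold myF; rw [min_comm, max_comm]

def myc (s ε n : ℕ) : Sym2 (Fin n) → ℕ :=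
  Sym2.lift ⟨fun a b => myF s ε n a.val b.val, fun _ _ => myF_comm ..⟩

lemma myc_mk (s ε n : ℕ) (a b : Fin n) :
    myc s ε n s(a, b) = myF s ε n a.val b.val := rfl

lemma sum_aux (M n : ℕ) (h : M ≤ n) :
    ∑ x ∈ Finset.range M, (n - (x + 1)) = Nat.choose M 2 + M * (n - M) := by
  induction M with
  | zero => simp
  | succ M ih =>
    rw [Finset.sum_range_succ, ih (by omega)]
    obtain ⟨d, hd⟩ : ∃ d, n - M = d + 1 := ⟨n - M - 1, by omega⟩
    have h1 : n - (M + 1) = d := by omega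
    rw [Nat.choose_succ_succ, Nat.choose_one_right, hd, h1]
    ring

theorem stmt_7 (k : ℕ) (hk : 2 ≤ k) (t : Fin k → ℕ) (ht : ∀ i, 2 ≤ t i)
    (heven : ∃ i, Even (t i)) (s ε : ℕ) (hs : s = ∑ i, t i / 2)
    (hε : ε = if (Finset.univ.filter fun i => Even (t i)).card = 1 then 1 else 0) :
    ∃ N : ℕ, ∀ n : ℕ, N ≤ n →
      ∃ c : Sym2 (Fin n) → ℕ,
        colorCount n c = Nat.choose (s - 2) 2 + (s - 2) * (n - s + 2) + 1 + ε ∧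
        ¬ RainbowLF n c t := by
  classical
  have hε01 : ε = 0 ∨ ε = 1 := by rw [hε]; split <;> simp
  have hs2 : 2 ≤ s := by
    have h1 : ∀ i : Fin k, 1 ≤ t i / 2 := fun i => by have := ht i; omega
    calc 2 ≤ k := hk
    _ = ∑ _i : Fin k, 1 := by simp
    _ ≤ ∑ i, t i / 2 := Finset.sum_le_sum fun i _ => h1 i
    _ = s := hs.symm
  refine ⟨s + 1, fun n hn => ⟨myc s ε n, ?_, ?_⟩⟩
  · have hb1 : s - 2 < n := by omega
    have hb2 : s - 1 < n := by omega
    have hb3 : s < n := by omega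
    unfold colorCount
    have himg1 : ((Finset.univ.filter fun e : Sym2 (Fin n) => ¬ e.IsDiag).filter
        (fun e => 2 ≤ myc s ε n e)).image (myc s ε n)
        = (((range (s-2)) ×ˢ (range n)).filter (fun q => q.1 < q.2)).image
          (fun q => 2 + q.1 * n + q.2) := by
      apply Finset.Subset.antisymm
      · intro x hx
        obtain ⟨e, he, rfl⟩ := Finset.mem_image.mp hx
        clear hx
        revert he
        induction e using Sym2.ind with
        | _ a b =>
          intro he
          obtain ⟨heT, hec⟩ := Finset.mem_filter.mp he
          have hne : a.val ≠ b.val := by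
            have h := (Finset.mem_filter.mp heT).2
            rw [Sym2.mk_isDiag_iff] at h
            exact fun hc => h (Fin.ext hc)
          rw [myc_mk] at hec
          unfold myF at hec
          split_ifs at hec with h1 h2
          · refine Finset.mem_image.mpr ⟨(min a.val b.val, max a.val b.val), ?_, ?_⟩
            · simp only [Finset.mem_filter, Finset.mem_product, Finset.mem_range]
              have ha := a.isLt
              have hbb := b.isLt
              refine ⟨⟨h1, ?_⟩, ?_⟩ <;> omega
            · rw [myc_mk]
              unfold myF
              rw [if_pos h1]
          · omega
          · omega
      · intro x hx
        obtain ⟨⟨u, v⟩, hq, rfl⟩ := Finset.mem_image.mp hx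
        simp only [Finset.mem_filter, Finset.mem_product, Finset.mem_range] at hq
        obtain ⟨⟨hu, hv⟩, huv⟩ := hq
        have hun : u < n := by omega
        refine Finset.mem_image.mpr ⟨s(⟨u, hun⟩, ⟨v, hv⟩), ?_, ?_⟩
        · refine Finset.mem_filter.mpr ⟨Finset.mem_filter.mpr ⟨Finset.mem_univ _, ?_⟩, ?_⟩
          · rw [Sym2.mk_isDiag_iff]
            intro hcn
            have hcv : u = v := congrArg Fin.val hcn
            omega
          · rw [myc_mk]
            unfold myF
            rw [if_pos (show min u v < s - 2 by omega)]
            exact le_trans (Nat.le_add_right 2 _) (Nat.le_add_right _ _)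
        · rw [myc_mk]
          unfold myF
          rw [if_pos (show min u v < s - 2 by omega)]
          show 2 + min u v * n + max u v = 2 + u * n + v
          rw [show min u v = u by omega, show max u v = v by omega]
    have hginj : Set.InjOn (fun q : ℕ × ℕ => 2 + q.1 * n + q.2)
        ↑(((range (s-2)) ×ˢ (range n)).filter (fun q => q.1 < q.2)) := by
      rintro ⟨u, v⟩ hq ⟨u', v'⟩ hq' he
      simp only [Finset.coe_filter, Set.mem_setOf_eq, Finset.mem_product,
        Finset.mem_range] at hq hq'
      dsimp only at he
      have hn0 : 0 < n := by omega
      have he' : u * n + v = u' * n + v' := by omega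
      have hu : u = u' := by
        have e1 : (u * n + v) / n = u := by
          rw [mul_comm, Nat.mul_add_div hn0, Nat.div_eq_of_lt hq.1.2]
          omega
        have e2 : (u' * n + v') / n = u' := by
          rw [mul_comm, Nat.mul_add_div hn0, Nat.div_eq_of_lt hq'.1.2]
          omega
        rw [← e1, ← e2, he']
      subst hu
      have hv : v = v' := by omega
      rw [hv]
    have hA2 : ((range (s-2)) ×ˢ (range n)).filter (fun q : ℕ × ℕ => q.1 < q.2)
        = (range (s-2)).biUnion (fun u => (Ico (u+1) n).image (fun v => (u, v))) := by
      ext ⟨u, v⟩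
      simp only [Finset.mem_filter, Finset.mem_product, Finset.mem_range,
        Finset.mem_biUnion, Finset.mem_image, Finset.mem_Ico, Prod.mk.injEq]
      constructor
      · rintro ⟨⟨hu, hv⟩, huv⟩
        exact ⟨u, hu, v, ⟨by omega, hv⟩, rfl, rfl⟩
      · rintro ⟨a, ha, b, ⟨h1, h2⟩, rfl, rfl⟩
        exact ⟨⟨ha, h2⟩, by omega⟩
    have hcardA : (((range (s-2)) ×ˢ (range n)).filter (fun q : ℕ × ℕ => q.1 < q.2)).card
        = Nat.choose (s-2) 2 + (s-2) * (n - (s-2)) := by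
      rw [hA2, Finset.card_biUnion ?disj]
      case disj =>
        intro x hx y hy hxy
        refine Finset.disjoint_left.mpr ?_
        intro q hq1 hq2
        obtain ⟨a, ha, rfl⟩ := Finset.mem_image.mp hq1
        obtain ⟨b, hb, hpb⟩ := Finset.mem_image.mp hq2
        exact hxy ((Prod.ext_iff.mp hpb).1.symm)
      calc ∑ u ∈ range (s-2), ((Ico (u+1) n).image (fun v => (u, v))).card
          = ∑ u ∈ range (s-2), (n - (u+1)) := by
            refine Finset.sum_congr rfl fun u hu => ?_
            rw [Finset.card_image_of_injective _
              (fun a b h => (Prod.ext_iff.mp h).2), Nat.card_Ico]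
        _ = _ := sum_aux (s-2) n (by omega)
    have hc1 : myc s ε n s(⟨s-2, hb1⟩, ⟨s-1, hb2⟩) = if ε = 1 then 1 else 0 := by
      rw [myc_mk]
      unfold myF
      rw [if_neg (show ¬ min (s-2) (s-1) < s - 2 by omega)]
      rcases hε01 with h0 | h1
      · rw [h0]; simp
      · rw [h1]
        rw [if_pos ⟨rfl, show min (s-2) (s-1) = s-2 by omega,
          show max (s-2) (s-1) = s-1 by omega⟩, if_pos rfl]
    have hc2 : myc s ε n s(⟨s-2, hb1⟩, ⟨s, hb3⟩) = 0 := by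
      rw [myc_mk]
      unfold myF
      rw [if_neg (show ¬ min (s-2) s < s - 2 by omega)]
      rw [if_neg (fun h => absurd h.2.2 (show ¬ max (s-2) s = s - 1 by omega))]
    have hm1 : s(⟨s-2, hb1⟩, (⟨s-1, hb2⟩ : Fin n))
        ∈ (Finset.univ.filter fun e : Sym2 (Fin n) => ¬ e.IsDiag) := by
      refine Finset.mem_filter.mpr ⟨Finset.mem_univ _, ?_⟩
      rw [Sym2.mk_isDiag_iff]
      intro hcn
      have hcv : s - 2 = s - 1 := congrArg Fin.val hcn
      omega
    have hm2 : s(⟨s-2, hb1⟩, (⟨s, hb3⟩ : Fin n))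
        ∈ (Finset.univ.filter fun e : Sym2 (Fin n) => ¬ e.IsDiag) := by
      refine Finset.mem_filter.mpr ⟨Finset.mem_univ _, ?_⟩
      rw [Sym2.mk_isDiag_iff]
      intro hcn
      have hcv : s - 2 = s := congrArg Fin.val hcn
      omega
    have himg2 : ((Finset.univ.filter fun e : Sym2 (Fin n) => ¬ e.IsDiag).filter
        (fun e => ¬ 2 ≤ myc s ε n e)).image (myc s ε n)
        = if ε = 1 then ({0, 1} : Finset ℕ) else {0} := by
      apply Finset.Subset.antisymm
      · intro x hx
        obtain ⟨e, he, rfl⟩ := Finset.mem_image.mp hx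
        have hlt : myc s ε n e < 2 := by
          have := (Finset.mem_filter.mp he).2
          omega
        have hne1 : ε = 0 → myc s ε n e ≠ 1 := by
          intro h0
          clear hlt he hx
          induction e using Sym2.ind with
          | _ a b =>
            rw [myc_mk]
            unfold myF
            split_ifs with hh hh2
            · intro hcn
              omega
            · exact absurd hh2.1 (by omega)
            · omega
        rcases hε01 with h0 | h1
        · rw [if_neg (by omega)]
          have := hne1 h0
          simp only [Finset.mem_singleton]
          omega
        · rw [if_pos h1]
          simp only [Finset.mem_insert, Finset.mem_singleton]
          omega
      · rcases hε01 with h0 | h1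
        · rw [if_neg (by omega)]
          intro x hx
          rw [Finset.mem_singleton] at hx
          subst hx
          refine Finset.mem_image.mpr ⟨s(⟨s-2, hb1⟩, ⟨s-1, hb2⟩), ?_, ?_⟩
          · refine Finset.mem_filter.mpr ⟨hm1, ?_⟩
            rw [hc1, if_neg (by omega)]
            omega
          · rw [hc1, if_neg (by omega)]
        · rw [if_pos h1]
          intro x hx
          simp only [Finset.mem_insert, Finset.mem_singleton] at hx
          rcases hx with rfl | rfl
          · refine Finset.mem_image.mpr ⟨s(⟨s-2, hb1⟩, ⟨s, hb3⟩), ?_, hc2⟩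
            refine Finset.mem_filter.mpr ⟨hm2, ?_⟩
            rw [hc2]
            omega
          · refine Finset.mem_image.mpr ⟨s(⟨s-2, hb1⟩, ⟨s-1, hb2⟩), ?_, ?_⟩
            · refine Finset.mem_filter.mpr ⟨hm1, ?_⟩
              rw [hc1, if_pos h1]
              omega
            · rw [hc1, if_pos h1]
    have hdisj : Disjoint
        (((Finset.univ.filter fun e : Sym2 (Fin n) => ¬ e.IsDiag).filter
          (fun e => 2 ≤ myc s ε n e)).image (myc s ε n))
        (((Finset.univ.filter fun e : Sym2 (Fin n) => ¬ e.IsDiag).filter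
          (fun e => ¬ 2 ≤ myc s ε n e)).image (myc s ε n)) := by
      rw [Finset.disjoint_left]
      intro x hx1 hx2
      obtain ⟨e, he, rfl⟩ := Finset.mem_image.mp hx1
      obtain ⟨e', he', heq⟩ := Finset.mem_image.mp hx2
      have h1 := (Finset.mem_filter.mp he).2
      have h2 := (Finset.mem_filter.mp he').2
      omega
    have hsplitT : (Finset.univ.filter fun e : Sym2 (Fin n) => ¬ e.IsDiag).image (myc s ε n)
        = ((Finset.univ.filter fun e : Sym2 (Fin n) => ¬ e.IsDiag).filter
            (fun e => 2 ≤ myc s ε n e)).image (myc s ε n)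
          ∪ ((Finset.univ.filter fun e : Sym2 (Fin n) => ¬ e.IsDiag).filter
            (fun e => ¬ 2 ≤ myc s ε n e)).image (myc s ε n) := by
      rw [← Finset.image_union, Finset.filter_union_filter_not_eq]
    rw [hsplitT, Finset.card_union_of_disjoint hdisj, himg1, himg2,
      Finset.card_image_of_injOn hginj, hcardA,
      show n - (s-2) = n - s + 2 by omega]
    rcases hε01 with h0 | h1
    · rw [h0, if_neg (by omega)]
      norm_num
    · rw [h1, if_pos rfl]
      norm_num [show ({0, 1} : Finset ℕ).card = 2 from rfl]
  · -- no rainbow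
    intro hR
    obtain ⟨p, hinj, hcinj⟩ := hR
    have ht0 : ∀ i, 0 < t i := fun i => lt_of_lt_of_le two_pos (ht i)
    set P : Fin k → ℕ → Fin n :=
      fun i j => if h : j < t i then p i ⟨j, h⟩ else p i ⟨0, ht0 i⟩ with hPdef
    have hP : ∀ i (j : ℕ) (h : j < t i), P i j = p i ⟨j, h⟩ := fun i j h => dif_pos h
    have hPinj : ∀ i i' j j', j < t i → j' < t i' → P i j = P i' j' →
        i = i' ∧ j = j' := by
      intro i i' j j' h h' he
      rw [hP i j h, hP i' j' h'] at he
      have h2 := hinj (a₁ := ⟨i, ⟨j, h⟩⟩) (a₂ := ⟨i', ⟨j', h'⟩⟩) he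
      obtain ⟨rfl, h3⟩ := Sigma.mk.inj_iff.mp h2
      rw [heq_eq_eq, Fin.mk.injEq] at h3
      exact ⟨rfl, h3⟩
    set mS : Fin k → Finset ℕ :=
      fun i => (range (t i)).filter (fun j => (P i j).val < s - 2) with hmSdef
    set eOut : Fin k → Finset ℕ :=
      fun i => (range (t i - 1)).filter
        (fun j => ¬((P i j).val < s - 2 ∨ (P i (j+1)).val < s - 2)) with heOutdef
    have hm_sum : ∑ i, (mS i).card ≤ s - 2 := by
      have hcard := Finset.card_le_card_of_injOn
        (s := Finset.univ.sigma mS) (t := range (s-2)) (fun q => (P q.1 q.2).val)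
        ?_ ?_
      · rwa [Finset.card_sigma, Finset.card_range] at hcard
      · rintro ⟨i, j⟩ hq
        simp only [Finset.mem_coe, Finset.mem_sigma, hmSdef, Finset.mem_filter, Finset.mem_range] at hq
        exact Finset.mem_range.mpr hq.2.2
      · rintro ⟨i, j⟩ hq ⟨i', j'⟩ hq' hval
        simp only [Finset.coe_sigma, Set.mem_sigma_iff, Finset.mem_coe, hmSdef,
          Finset.mem_filter, Finset.mem_range] at hq hq'
        obtain ⟨rfl, rfl⟩ := hPinj i i' j j' hq.2.1 hq'.2.1 (Fin.val_injective hval)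
        rfl
    have hper : ∀ i, 2 * (t i / 2) ≤ 2 * (mS i).card + (eOut i).card +
        (if Even (t i) ∧ 1 ≤ (eOut i).card then 1 else 0) := by
      intro i
      have ht2 := ht i
      have hcov : ((range (t i - 1)).filter
          (fun j => (P i j).val < s - 2 ∨ (P i (j+1)).val < s - 2)).card
          ≤ (mS i).card * 2 := by
        have hc2 := Finset.card_le_card_of_injOn
          (s := (range (t i - 1)).filter
            (fun j => (P i j).val < s - 2 ∨ (P i (j+1)).val < s - 2))
          (f := fun j => if (P i j).val < s - 2 then ((j : ℕ), false) else (j+1, true))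
          (t := (mS i) ×ˢ (Finset.univ : Finset Bool)) ?_ ?_
        · rwa [Finset.card_product, Finset.card_univ, Fintype.card_bool] at hc2
        · intro j hj
          simp only [Finset.mem_coe, Finset.mem_filter, Finset.mem_range] at hj
          dsimp only
          by_cases h : (P i j).val < s - 2
          · rw [if_pos h]
            refine Finset.mem_product.mpr ⟨?_, Finset.mem_univ _⟩
            simp only [hmSdef, Finset.mem_filter, Finset.mem_range]
            exact ⟨by omega, h⟩
          · rw [if_neg h]
            refine Finset.mem_product.mpr ⟨?_, Finset.mem_univ _⟩
            simp only [hmSdef, Finset.mem_filter, Finset.mem_range]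
            exact ⟨by omega, hj.2.resolve_left h⟩
        · intro j hj j' hj' he
          dsimp only at he
          split_ifs at he with ha hb hb <;>
            simp only [Prod.mk.injEq, Bool.false_eq_true, Bool.true_eq_false,
              and_false, false_and] at he <;> omega
      have hsplit : ((range (t i - 1)).filter
          (fun j => (P i j).val < s - 2 ∨ (P i (j+1)).val < s - 2)).card
          + (eOut i).card = t i - 1 := by
        rw [heOutdef]
        simpa using Finset.card_filter_add_card_filter_not
          (s := range (t i - 1))
          (p := fun j => (P i j).val < s - 2 ∨ (P i (j+1)).val < s - 2)
      rcases Nat.even_or_odd (t i) with hEv | hOd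
      · have hm2 := Nat.even_iff.mp hEv
        split_ifs with h
        · omega
        · have hu0 : (eOut i).card = 0 := by
            by_contra hc
            exact h ⟨hEv, by omega⟩
          omega
      · have hm2 := Nat.odd_iff.mp hOd
        split_ifs with h
        · omega
        · omega
    have hUsum : ∑ i, (eOut i).card ≤ 1 + ε := by
      rw [← Finset.card_sigma]
      have hmem0 : ∀ q ∈ Finset.univ.sigma eOut,
          myc s ε n s(P q.1 q.2, P q.1 (q.2+1)) = 0 ∨
          (ε = 1 ∧ myc s ε n s(P q.1 q.2, P q.1 (q.2+1)) = 1) := by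
        rintro ⟨i, j⟩ hq
        simp only [Finset.mem_sigma, heOutdef, Finset.mem_filter, Finset.mem_range] at hq
        obtain ⟨-, hj, hnc⟩ := hq
        push_neg at hnc
        rw [myc_mk]
        unfold myF
        rw [if_neg (by omega : ¬ min (P i j).val (P i (j+1)).val < s - 2)]
        split_ifs with h
        · exact Or.inr ⟨h.1, rfl⟩
        · exact Or.inl rfl
      have hinj3 : Set.InjOn
          (fun q : (_ : Fin k) × ℕ => myc s ε n s(P q.1 q.2, P q.1 (q.2+1)))
          ↑(Finset.univ.sigma eOut) := by
        rintro ⟨i, j⟩ hq ⟨i', j'⟩ hq' he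
        simp only [Finset.coe_sigma, Set.mem_sigma_iff, Finset.mem_coe, heOutdef,
          Finset.mem_filter, Finset.mem_range] at hq hq'
        have hti := ht i; have hti' := ht i'
        have hj1 : j + 1 < t i := by omega
        have hj1' : j' + 1 < t i' := by omega
        have he' : myc s ε n s(P i j, P i (j+1)) = myc s ε n s(P i' j', P i' (j'+1)) := he
        rw [hP i j (Nat.lt_of_succ_lt hj1), hP i (j+1) hj1,
          hP i' j' (Nat.lt_of_succ_lt hj1'), hP i' (j'+1) hj1'] at he'
        have h4 := hcinj (a₁ := ⟨i, ⟨j, hj1⟩⟩) (a₂ := ⟨i', ⟨j', hj1'⟩⟩) he'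
        obtain ⟨rfl, h5⟩ := Sigma.mk.inj_iff.mp h4
        rw [heq_eq_eq, Subtype.mk.injEq] at h5
        rw [h5]
      rcases hε01 with h0 | h1x
      · have hc := Finset.card_le_card_of_injOn (t := ({0} : Finset ℕ)) _
          (fun q hq => ?_) hinj3
        · simpa [h0] using hc
        · rcases hmem0 q hq with h | h
          · exact Finset.mem_singleton.mpr h
          · exact absurd (h.1.symm.trans h0) one_ne_zero
      · have hc := Finset.card_le_card_of_injOn (t := ({0, 1} : Finset ℕ)) _
          (fun q hq => ?_) hinj3
        · have : ({0, 1} : Finset ℕ).card = 2 := by decide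
          omega
        · simp only [Finset.mem_coe, Finset.mem_insert, Finset.mem_singleton]
          rcases hmem0 q hq with h | h
          · exact Or.inl h
          · exact Or.inr h.2
    have hEsumU : (∑ i, if Even (t i) ∧ 1 ≤ (eOut i).card then 1 else 0) ≤
        ∑ i, (eOut i).card := by
      refine Finset.sum_le_sum fun i _ => ?_
      split_ifs with h
      · exact h.2
      · exact Nat.zero_le _
    have hmain : 2 * s ≤ 2 * (∑ i, (mS i).card) + (∑ i, (eOut i).card) +
        (∑ i, if Even (t i) ∧ 1 ≤ (eOut i).card then 1 else 0) := by
      have h1 : 2 * s = ∑ i, 2 * (t i / 2) := by rw [hs, Finset.mul_sum]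
      rw [h1, Finset.mul_sum, ← Finset.sum_add_distrib, ← Finset.sum_add_distrib]
      exact Finset.sum_le_sum fun i _ => hper i
    rcases hε01 with h0 | h1
    · omega
    · have he1 : (Finset.univ.filter fun i => Even (t i)).card = 1 := by
        by_contra hc
        rw [hε, if_neg hc] at h1
        omega
      have hEsum1 : (∑ i, if Even (t i) ∧ 1 ≤ (eOut i).card then 1 else 0) ≤ 1 := by
        calc (∑ i, if Even (t i) ∧ 1 ≤ (eOut i).card then 1 else 0)
            ≤ ∑ i, (if Even (t i) then 1 else 0) := by
              refine Finset.sum_le_sum fun i _ => ?_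
              by_cases hEv : Even (t i)
              · simp only [hEv, if_true, true_and]
                split_ifs <;> omega
              · simp only [hEv, false_and, if_false]
                exact Nat.zero_le _
          _ = (Finset.univ.filter fun i => Even (t i)).card := by
              rw [Finset.card_filter]
          _ = 1 := he1
      omega
end
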